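/- Let R → S be an inclusion of k-algebras with an R-linear splitting σ : S → R (σ(1) = 1). For any k-linear differential operator δ of order ≤ m on S, the composite s ↦ σ(δ(s)) restricted to R is a k-linear differential operator of order ≤ m on R. -/
import Mathlib


/-- `IsDiffOp k A m δ` : the `k`-linear endomorphism `δ` of `A` is a `k`-linear differential
operator of order `≤ m`, defined inductively: operators of order `≤ 0` are multiplications by
ring elements, and `δ` has order `≤ m+1` if `[δ, r] = δ∘(r·) − (r·)∘δ` has order `≤ m` for
every `r ∈ A`. -/
def IsDiffOp (k : Type*) (A : Type*) [CommSemiring k] [CommRing A] [Algebra k A] :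
    ℕ → (A →ₗ[k] A) → Prop
  | 0, δ => ∃ a : A, ∀ x : A, δ x = a * x
  | m + 1, δ => ∀ r : A,
      IsDiffOp k A m (δ ∘ₗ LinearMap.mulLeft k r - LinearMap.mulLeft k r ∘ₗ δ)

/-- Let `R ⊆ S` be an inclusion of `k`-algebras with an `R`-linear splitting `σ : S → R`
(`σ 1 = 1`). For any `k`-linear differential operator `δ` of order `≤ m` on `S`, the
composite `r ↦ σ(δ(r))` (i.e. `σ ∘ δ` restricted to `R`) is a `k`-linear differential
operator of order `≤ m` on `R`. -/
theorem diffOp_of_splitting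
    (k R S : Type*) [CommSemiring k] [CommRing R] [CommRing S]
    [Algebra k R] [Algebra k S]
    (φ : R →ₐ[k] S) (hφ : Function.Injective φ)
    (σ : S →ₗ[k] R) (hσlin : ∀ (r : R) (s : S), σ (φ r * s) = r * σ s) (hσ1 : σ 1 = 1)
    (m : ℕ) (δ : S →ₗ[k] S) (hδ : IsDiffOp k S m δ) :
    IsDiffOp k R m (σ ∘ₗ δ ∘ₗ φ.toLinearMap) := by
  induction m generalizing δ with
  | zero =>
    obtain ⟨a, ha⟩ := hδ
    refine ⟨σ a, fun x => ?_⟩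
    rw [LinearMap.comp_apply, LinearMap.comp_apply, AlgHom.toLinearMap_apply, ha,
      mul_comm a (φ x), hσlin, mul_comm]
  | succ m ih =>
    intro r
    have key : (σ ∘ₗ δ ∘ₗ φ.toLinearMap) ∘ₗ LinearMap.mulLeft k r -
        LinearMap.mulLeft k r ∘ₗ (σ ∘ₗ δ ∘ₗ φ.toLinearMap) =
        σ ∘ₗ (δ ∘ₗ LinearMap.mulLeft k (φ r) - LinearMap.mulLeft k (φ r) ∘ₗ δ) ∘ₗ
          φ.toLinearMap := by
      ext x
      simp only [LinearMap.sub_apply, LinearMap.comp_apply, AlgHom.toLinearMap_apply,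
        LinearMap.mulLeft_apply, map_sub, map_mul, hσlin]
    rw [key]
    exact ih _ (hδ (φ r))
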